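/- arXiv:1404.7731 — 2 statements merged into one kernel-verified Lean document; each statement's English description precedes it below -/
import Mathlib

section
/- Let d, r, n be positive integers with d ≥ 2. If for every positive integer j the inequality C(jd + r - 1, r) ≤ n · C(j + r - 1, r) holds (where C denotes the binomial coefficient), then n ≥ d^r. -/
/-- Bernoulli-type bound: `(b+c)^k ≤ b^k + k*c*(b+c)^(k-1)` for naturals. -/
lemma aux_pow_le_bernoulli (b c : ℕ) :
    ∀ k : ℕ, (b + c) ^ k ≤ b ^ k + k * c * (b + c) ^ (k - 1) := by
  intro k
  induction k with
  | zero => simp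
  | succ k ih =>
    have h4 : k * ((b + c) * (b + c) ^ (k - 1)) ≤ k * (b + c) ^ k := by
      rcases k with _ | m
      · simp
      · rw [Nat.succ_sub_one, ← pow_succ']
    have h6 : c * b ^ k ≤ c * (b + c) ^ k :=
      Nat.mul_le_mul_left _ (Nat.pow_le_pow_left (by omega) k)
    have h7 : k * c * ((b + c) * (b + c) ^ (k - 1)) ≤ k * c * (b + c) ^ k := by
      calc k * c * ((b + c) * (b + c) ^ (k - 1))
          = c * (k * ((b + c) * (b + c) ^ (k - 1))) := by ring
        _ ≤ c * (k * (b + c) ^ k) := Nat.mul_le_mul_left _ h4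
        _ = k * c * (b + c) ^ k := by ring
    calc (b + c) ^ (k + 1) = (b + c) * (b + c) ^ k := by ring
      _ ≤ (b + c) * (b ^ k + k * c * (b + c) ^ (k - 1)) := Nat.mul_le_mul_left _ ih
      _ = b ^ (k + 1) + c * b ^ k + k * c * ((b + c) * (b + c) ^ (k - 1)) := by ring
      _ ≤ b ^ (k + 1) + c * (b + c) ^ k + k * c * (b + c) ^ k :=
          Nat.add_le_add (Nat.add_le_add_left h6 _) h7
      _ = b ^ (k + 1) + (k + 1) * c * (b + c) ^ (k + 1 - 1) := by
          rw [Nat.add_sub_cancel]; ring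

/-- Let `d, r, n` be positive integers with `d ≥ 2`. If for every positive integer `j`
we have `C(jd + r - 1, r) ≤ n · C(j + r - 1, r)`, then `n ≥ d^r`. -/
theorem binomial_growth_forces_power_bound (d r n : ℕ) (hd : 2 ≤ d) (hr : 1 ≤ r) (hn : 1 ≤ n)
    (h : ∀ j : ℕ, 1 ≤ j → Nat.choose (j * d + r - 1) r ≤ n * Nat.choose (j + r - 1) r) :
    d ^ r ≤ n := by
  by_contra hcon
  push_neg at hcon
  set N := d ^ r with hN
  have hN2 : 2 ≤ N := by
    calc 2 = 2 ^ 1 := rfl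
    _ ≤ 2 ^ r := Nat.pow_le_pow_right (by norm_num) hr
    _ ≤ d ^ r := Nat.pow_le_pow_left hd r
  have hr2 : 1 ≤ r ^ 2 := Nat.one_le_pow _ _ (by omega)
  have h2r : 1 ≤ 2 ^ r := Nat.one_le_two_pow
  have h2r1 : 1 ≤ 2 ^ (r - 1) := Nat.one_le_two_pow
  set j := r ^ 2 * N * 2 ^ r with hj
  have hj1 : 1 ≤ j := by
    calc 1 = 1 * 1 * 1 := by norm_num
    _ ≤ r ^ 2 * N * 2 ^ r := by
        exact Nat.mul_le_mul (Nat.mul_le_mul hr2 (by omega)) h2r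
  have hkey := h j hj1
  -- multiply by r! to get descFactorial inequality
  have hdesc : (j * d + r - 1).descFactorial r ≤ n * ((j + r - 1).descFactorial r) := by
    rw [Nat.descFactorial_eq_factorial_mul_choose, Nat.descFactorial_eq_factorial_mul_choose]
    calc r.factorial * (j * d + r - 1).choose r
        ≤ r.factorial * (n * (j + r - 1).choose r) := Nat.mul_le_mul_left _ hkey
      _ = n * (r.factorial * (j + r - 1).choose r) := by ring
  -- lower bound
  have hlow : (j * d) ^ r ≤ (j * d + r - 1).descFactorial r := by
    have := Nat.pow_sub_le_descFactorial (j * d + r - 1) r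
    have heq : j * d + r - 1 + 1 - r = j * d := by omega
    rwa [heq] at this
  -- upper bound
  have hup : (j + r - 1).descFactorial r ≤ (j + r) ^ r := by
    calc (j + r - 1).descFactorial r ≤ (j + r - 1) ^ r := Nat.descFactorial_le_pow _ r
      _ ≤ (j + r) ^ r := Nat.pow_le_pow_left (by omega) r
  have hmain : N * j ^ r ≤ (N - 1) * (j + r) ^ r := by
    calc N * j ^ r = (j * d) ^ r := by rw [hN, mul_pow]; ring
      _ ≤ (j * d + r - 1).descFactorial r := hlow
      _ ≤ n * ((j + r - 1).descFactorial r) := hdesc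
      _ ≤ n * (j + r) ^ r := Nat.mul_le_mul_left _ hup
      _ ≤ (N - 1) * (j + r) ^ r := Nat.mul_le_mul_right _ (by omega)
  -- Bernoulli bound
  have hbern : (j + r) ^ r ≤ j ^ r + r * r * (j + r) ^ (r - 1) :=
    aux_pow_le_bernoulli j r r
  have h2j : (j + r) ^ (r - 1) ≤ 2 ^ (r - 1) * j ^ (r - 1) := by
    have hrj : r ≤ j := by
      calc r ≤ r ^ 2 := by nlinarith
        _ ≤ r ^ 2 * (N * 2 ^ r) := Nat.le_mul_of_pos_right _ (by positivity)
        _ = j := by rw [hj]; ring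
    calc (j + r) ^ (r - 1) ≤ (2 * j) ^ (r - 1) := Nat.pow_le_pow_left (by omega) _
      _ = 2 ^ (r - 1) * j ^ (r - 1) := mul_pow 2 j (r - 1)
  have hjpow : j ^ r = j * j ^ (r - 1) := by
    conv_lhs => rw [show r = 1 + (r - 1) by omega]
    rw [pow_add, pow_one]
  have hjpos : 0 < j ^ (r - 1) := Nat.pow_pos (by omega)
  have hstrict : (N - 1) * (r * r * (j + r) ^ (r - 1)) < j ^ r := by
    calc (N - 1) * (r * r * (j + r) ^ (r - 1))
        ≤ (N - 1) * (r * r * (2 ^ (r - 1) * j ^ (r - 1))) := by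
          exact Nat.mul_le_mul_left _ (Nat.mul_le_mul_left _ h2j)
      _ = ((N - 1) * r ^ 2 * 2 ^ (r - 1)) * j ^ (r - 1) := by ring
      _ < j * j ^ (r - 1) := by
          apply Nat.mul_lt_mul_of_lt_of_le _ (le_refl _) hjpos
          have h2rr : 2 ^ r = 2 * 2 ^ (r - 1) := by
            conv_lhs => rw [show r = 1 + (r - 1) by omega]
            rw [pow_add, pow_one]
          calc (N - 1) * r ^ 2 * 2 ^ (r - 1) = (N - 1) * (r ^ 2 * 2 ^ (r - 1)) := by ring
            _ < N * 2 * (r ^ 2 * 2 ^ (r - 1)) :=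
                Nat.mul_lt_mul_of_lt_of_le (by omega) (le_refl _) (by positivity)
            _ = r ^ 2 * N * (2 * 2 ^ (r - 1)) := by ring
            _ = j := by rw [hj, h2rr]
      _ = j ^ r := hjpow.symm
  have hfin : N * j ^ r < N * j ^ r := by
    calc N * j ^ r ≤ (N - 1) * (j + r) ^ r := hmain
      _ ≤ (N - 1) * (j ^ r + r * r * (j + r) ^ (r - 1)) := Nat.mul_le_mul_left _ hbern
      _ = (N - 1) * j ^ r + (N - 1) * (r * r * (j + r) ^ (r - 1)) := by ring
      _ < (N - 1) * j ^ r + j ^ r := Nat.add_lt_add_left hstrict _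
      _ = (N - 1 + 1) * j ^ r := by ring
      _ = N * j ^ r := by rw [show N - 1 + 1 = N by omega]
  omega
end

section
/- Let m, n be positive integers, a₁,...,a_n nonnegative integers not all zero, and ν₁,...,ν_n ∈ {0,1,...,m} with ∑_{i=1}^n a_i ν_i ≥ m. Then ∑_{i=1}^n ν_i(ν_i + 1) ≥ m(m+1)/(∑_{i=1}^n a_i²). Moreover, if ν_i = a_i·ℓ for a positive integer ℓ and m = ℓ·∑_i a_i², then ∑_i ν_i(ν_i+1) - m(m+1)/(∑_i a_i²) = ℓ·(∑_i a_i - 1). -/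
/-- Let `m, n` be positive integers, `a₁,...,a_n` nonnegative integers not all zero, and
`ν₁,...,ν_n ∈ {0,...,m}` with `∑ a_i ν_i ≥ m`. Then
`∑ ν_i (ν_i + 1) ≥ m(m+1) / (∑ a_i²)` (in `ℚ`). Moreover, if `ν_i = a_i·ℓ` for a positive
integer `ℓ` and `m = ℓ·∑ a_i²`, then
`∑ ν_i(ν_i+1) - m(m+1)/(∑ a_i²) = ℓ·(∑ a_i - 1)`. -/
theorem sum_nu_bound (m n : ℕ) (hm : 1 ≤ m) (hn : 1 ≤ n) (a ν : Fin n → ℕ)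
    (ha : ∃ i, a i ≠ 0) (hν : ∀ i, ν i ≤ m) (hs : m ≤ ∑ i, a i * ν i) :
    ((m * (m + 1) : ℚ) / (∑ i, (a i : ℚ) ^ 2) ≤ ∑ i, (ν i : ℚ) * (ν i + 1)) ∧
    (∀ ℓ : ℕ, 1 ≤ ℓ → (∀ i, ν i = a i * ℓ) → m = ℓ * ∑ i, a i ^ 2 →
      (∑ i, (ν i : ℚ) * (ν i + 1)) - (m * (m + 1) : ℚ) / (∑ i, (a i : ℚ) ^ 2) =
        ℓ * ((∑ i, (a i : ℚ)) - 1)) := by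
  have hS0 : (0 : ℚ) < ∑ i, (a i : ℚ) ^ 2 := by
    obtain ⟨i, hi⟩ := ha
    have hai : (0 : ℚ) < (a i : ℚ) := by exact_mod_cast Nat.pos_of_ne_zero hi
    exact Finset.sum_pos' (fun j _ => by positivity)
      ⟨i, Finset.mem_univ i, by positivity⟩
  have hT : (m : ℚ) ≤ ∑ i, (a i : ℚ) * ν i := by
    have := hs
    push_cast
    exact_mod_cast this
  have hCS : (∑ i, (a i : ℚ) * ν i) ^ 2 ≤
      (∑ i, (a i : ℚ) ^ 2) * ∑ i, (ν i : ℚ) ^ 2 :=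
    Finset.sum_mul_sq_le_sq_mul_sq _ _ _
  have hTν : (∑ i, (a i : ℚ) * ν i) ≤ (∑ i, (a i : ℚ) ^ 2) * ∑ i, (ν i : ℚ) := by
    calc ∑ i, (a i : ℚ) * ν i ≤ ∑ i, (a i : ℚ) ^ 2 * ν i := by
          refine Finset.sum_le_sum fun i _ => ?_
          have h1 : (a i : ℚ) ≤ (a i : ℚ) ^ 2 := by
            exact_mod_cast Nat.le_self_pow two_ne_zero (a i)
          exact mul_le_mul_of_nonneg_right h1 (by positivity)
      _ ≤ ∑ i, (a i : ℚ) ^ 2 * ∑ j, (ν j : ℚ) := by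
          refine Finset.sum_le_sum fun i _ => ?_
          exact mul_le_mul_of_nonneg_left
            (Finset.single_le_sum (f := fun j => (ν j : ℚ)) (fun j _ => by positivity) (Finset.mem_univ i))
            (by positivity)
      _ = (∑ i, (a i : ℚ) ^ 2) * ∑ i, (ν i : ℚ) := by rw [← Finset.sum_mul]
  have hsplit : ∑ i, (ν i : ℚ) * (ν i + 1) =
      (∑ i, (ν i : ℚ) ^ 2) + ∑ i, (ν i : ℚ) := by
    rw [← Finset.sum_add_distrib]
    exact Finset.sum_congr rfl fun i _ => by ring
  constructor
  · have h1 : (m : ℚ) ^ 2 ≤ (∑ i, (a i : ℚ) ^ 2) * ∑ i, (ν i : ℚ) ^ 2 := by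
      have hm0 : (0 : ℚ) ≤ (m : ℚ) := by positivity
      nlinarith [hT, hCS]
    have h2 : (m : ℚ) ≤ (∑ i, (a i : ℚ) ^ 2) * ∑ i, (ν i : ℚ) := le_trans hT hTν
    rw [div_le_iff₀ hS0, hsplit]
    nlinarith [h1, h2]
  · intro ℓ hℓ hν' hm'
    have hsum : ∑ i, (ν i : ℚ) * (ν i + 1) =
        (ℓ : ℚ) ^ 2 * (∑ i, (a i : ℚ) ^ 2) + (ℓ : ℚ) * ∑ i, (a i : ℚ) := by
      rw [Finset.mul_sum, Finset.mul_sum, ← Finset.sum_add_distrib]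
      refine Finset.sum_congr rfl fun i _ => ?_
      rw [hν' i]; push_cast; ring
    have hmQ : (m : ℚ) = (ℓ : ℚ) * ∑ i, (a i : ℚ) ^ 2 := by
      rw [hm']; push_cast; ring
    rw [hsum, hmQ]
    field_simp
    ring
end
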